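/- arXiv:math/0205210 — 2 statements merged into one kernel-verified Lean document; each statement's English description precedes it below -/
import Mathlib

section
/- Let C be an abelian category of finite length. Assume that Ext^2(B, B') = 0 for all semisimple objects B, B' of C. Then Ext^2(A, B) = 0 for all objects A, B of C; that is, C has cohomological dimension ≤ 1. -/
/-!
STATEMENT 1 (Lemma 9.2 of the paper):
Let `C` be an abelian category of finite length (the subobject lattice of every object
satisfies the ascending and descending chain conditions). Assume `Ext²(B, B') = 0` for
all semisimple objects `B`, `B'` (finite direct sums of simple objects). Then
`Ext²(A, B) = 0` for all objects `A`, `B`; i.e. `C` has cohomological dimension ≤ 1.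
-/

open CategoryTheory CategoryTheory.Abelian CategoryTheory.Limits

attribute [local instance] CategoryTheory.Abelian.hasFiniteBiproducts

universe w v u

/-- An object of an abelian category is semisimple if it is isomorphic to a finite
direct sum (biproduct) of simple objects. -/
def IsSemisimpleObject {C : Type u} [Category.{v} C] [Abelian C] (X : C) : Prop :=
  ∃ (n : ℕ) (f : Fin n → C), (∀ i, Simple (f i)) ∧ Nonempty (X ≅ ⨁ f)

namespace Stmt1Aux

variable {C : Type u} [Category.{v} C] [Abelian C]

lemma semisimple_of_simple (S : C) (hS : Simple S) : IsSemisimpleObject S := by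
  refine ⟨1, fun _ => S, fun _ => hS, ⟨?_⟩⟩
  refine ⟨biproduct.lift fun _ => 𝟙 S, biproduct.π _ 0, by simp, ?_⟩
  ext j
  simp [Subsingleton.elim j 0]

section Ext
variable [HasExt.{w} C]

lemma subsing_of_isZero_right {X Y : C} (h : IsZero Y) (n : ℕ) :
    Subsingleton (Ext X Y n) := by
  refine ⟨fun a b => ?_⟩
  have key : ∀ x : Ext X Y n, x = 0 := by
    intro x
    have h0 : (𝟙 Y) = (0 : Y ⟶ Y) := h.eq_of_src _ _
    rw [← Ext.comp_mk₀_id x, h0, Ext.mk₀_zero, Ext.comp_zero]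
  rw [key a, key b]

lemma subsing_of_isZero_left {X Y : C} (h : IsZero X) (n : ℕ) :
    Subsingleton (Ext X Y n) := by
  refine ⟨fun a b => ?_⟩
  have key : ∀ x : Ext X Y n, x = 0 := by
    intro x
    have h0 : (𝟙 X) = (0 : X ⟶ X) := h.eq_of_src _ _
    rw [← Ext.mk₀_id_comp x, h0, Ext.mk₀_zero, Ext.zero_comp]
  rw [key a, key b]

lemma subsing_iso_right {X Y Y' : C} (e : Y ≅ Y') (n : ℕ)
    (h : Subsingleton (Ext X Y n)) : Subsingleton (Ext X Y' n) := by
  refine ⟨fun a b => ?_⟩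
  have key : ∀ x : Ext X Y' n, x = 0 := by
    intro x
    have h1 : x.comp (Ext.mk₀ e.inv) (add_zero n) = 0 := Subsingleton.elim _ _
    calc x = (x.comp (Ext.mk₀ e.inv) (add_zero n)).comp (Ext.mk₀ e.hom) (add_zero n) := by
            rw [Ext.comp_assoc_of_third_deg_zero, Ext.mk₀_comp_mk₀, e.inv_hom_id,
              Ext.comp_mk₀_id]
      _ = 0 := by rw [h1, Ext.zero_comp]
  rw [key a, key b]

lemma subsing_iso_left {X X' Y : C} (e : X ≅ X') (n : ℕ)
    (h : Subsingleton (Ext X Y n)) : Subsingleton (Ext X' Y n) := by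
  refine ⟨fun a b => ?_⟩
  have key : ∀ x : Ext X' Y n, x = 0 := by
    intro x
    have h1 : (Ext.mk₀ e.hom).comp x (zero_add n) = 0 := Subsingleton.elim _ _
    calc x = (Ext.mk₀ e.inv).comp ((Ext.mk₀ e.hom).comp x (zero_add n)) (zero_add n) := by
            rw [← Ext.comp_assoc_of_second_deg_zero, Ext.mk₀_comp_mk₀, e.inv_hom_id,
              Ext.mk₀_id_comp]
      _ = 0 := by rw [h1, Ext.comp_zero]
  rw [key a, key b]

lemma subsing_middle_cov {S : ShortComplex C} (hS : S.ShortExact) (X : C) (n : ℕ)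
    (h1 : Subsingleton (Ext X S.X₁ n)) (h3 : Subsingleton (Ext X S.X₃ n)) :
    Subsingleton (Ext X S.X₂ n) := by
  refine ⟨fun a b => ?_⟩
  have key : ∀ x : Ext X S.X₂ n, x = 0 := by
    intro x
    have hx : x.comp (Ext.mk₀ S.g) (add_zero n) = 0 := Subsingleton.elim _ _
    obtain ⟨x₁, hx₁⟩ := Ext.covariant_sequence_exact₂ X hS x hx
    rw [← hx₁, Subsingleton.elim x₁ 0, Ext.zero_comp]
  rw [key a, key b]

lemma subsing_middle_contra {S : ShortComplex C} (hS : S.ShortExact) (Y : C) (n : ℕ)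
    (h3 : Subsingleton (Ext S.X₃ Y n)) (h1 : Subsingleton (Ext S.X₁ Y n)) :
    Subsingleton (Ext S.X₂ Y n) := by
  refine ⟨fun a b => ?_⟩
  have key : ∀ x : Ext S.X₂ Y n, x = 0 := by
    intro x
    have hx : (Ext.mk₀ S.f).comp x (zero_add n) = 0 := Subsingleton.elim _ _
    obtain ⟨x₃, hx₃⟩ := Ext.contravariant_sequence_exact₂ hS Y x hx
    rw [← hx₃, Subsingleton.elim x₃ 0, Ext.comp_zero]
  rw [key a, key b]

end Ext

/-- The short exact sequence `0 → T → X → X/T → 0`. -/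
lemma ses_shortExact (X : C) (T : Subobject X) :
    (ShortComplex.mk T.arrow (cokernel.π T.arrow) (cokernel.condition _)).ShortExact where
  exact := ShortComplex.exact_of_g_is_cokernel _ (cokernelIsCokernel _)

lemma quotInd (hlen : ∀ X : C, WellFoundedGT (Subobject X) ∧ WellFoundedLT (Subobject X))
    (P : C → Prop)
    (hiso : ∀ {X Y : C}, (X ≅ Y) → P X → P Y)
    (hzero : ∀ X : C, IsZero X → P X)
    (hstep : ∀ (X : C) (T : Subobject X), Simple (T : C) → P (cokernel T.arrow) → P X) :
    ∀ X : C, P X := by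
  intro X
  have main : ∀ K : Subobject X, P (cokernel K.arrow) := by
    intro K
    induction K using WellFounded.induction (hlen X).1.wf with
    | _ K IH =>
    by_cases hzQ : IsZero (cokernel K.arrow)
    · exact hzero _ hzQ
    · haveI : IsArtinianObject (cokernel K.arrow) := ⟨(hlen _).2⟩
      obtain ⟨T, hT⟩ := exists_simple_subobject hzQ
      refine hstep _ T hT ?_
      set π := cokernel.π K.arrow
      set q := cokernel.π T.arrow
      set g : X ⟶ cokernel T.arrow := π ≫ q with hg
      haveI : Epi g := epi_comp _ _
      set K' : Subobject X := Subobject.mk (kernel.ι g) with hK'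
      have hle : K ≤ K' := by
        refine Subobject.le_mk_of_comm (kernel.lift g K.arrow ?_) (kernel.lift_ι _ _ _)
        rw [hg, ← Category.assoc, cokernel.condition, zero_comp]
      have hne : ¬ K' ≤ K := by
        intro hle'
        have hιπ : kernel.ι g ≫ π = 0 := by
          have h1 : kernel.ι g = (Subobject.underlyingIso (kernel.ι g)).inv ≫ K'.arrow :=
            (Subobject.underlyingIso_arrow _).symm
          have h2 : (Subobject.ofLE K' K hle') ≫ K.arrow = K'.arrow := Subobject.ofLE_arrow hle'
          rw [h1, ← h2, Category.assoc, Category.assoc, cokernel.condition, comp_zero, comp_zero]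
        have hcond : pullback.fst T.arrow π ≫ T.arrow = pullback.snd T.arrow π ≫ π :=
          pullback.condition
        have hsndg : pullback.snd T.arrow π ≫ g = 0 := by
          rw [hg, ← Category.assoc, ← hcond, Category.assoc, cokernel.condition, comp_zero]
        have hfac : kernel.lift g _ hsndg ≫ kernel.ι g = pullback.snd T.arrow π :=
          kernel.lift_ι _ _ _
        have hzero' : pullback.fst T.arrow π ≫ T.arrow = 0 := by
          rw [hcond, ← hfac, Category.assoc, hιπ, comp_zero]
        haveI : Epi (pullback.fst T.arrow π) := Abelian.epi_pullback_of_epi_g _ _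
        have hT0 : T.arrow = 0 := by
          rw [← cancel_epi (pullback.fst T.arrow π), hzero', comp_zero]
        have : IsZero (T : C) := by
          rw [IsZero.iff_id_eq_zero]
          rw [← cancel_mono T.arrow, hT0, comp_zero, zero_comp]
        exact (Simple.not_isZero (T : C)) this
      have hlt : K < K' := lt_of_le_of_ne hle (fun h => hne (le_of_eq h.symm))
      have hP := IH K' hlt
      refine hiso ?_ hP
      have harr : K'.arrow = (Subobject.underlyingIso (kernel.ι g)).hom ≫ kernel.ι g :=
        (Subobject.underlyingIso_hom_comp_eq_mk _).symm
      exact (cokernelIsoOfEq harr) ≪≫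
        (cokernelEpiComp (Subobject.underlyingIso (kernel.ι g)).hom (kernel.ι g)) ≪≫
        (IsColimit.coconePointUniqueUpToIso (cokernelIsCokernel (kernel.ι g))
          (Abelian.epiIsCokernelOfKernel (KernelFork.ofι (kernel.ι g) (kernel.condition g)) (kernelIsKernel g)))
  have h0 := main ⊥
  refine hiso ?_ h0
  exact (cokernelIsoOfEq (Subobject.bot_arrow)) ≪≫ cokernelZeroIsoTarget

end Stmt1Aux

theorem stmt1 {C : Type u} [Category.{v} C] [Abelian C] [HasExt.{w} C]
    (hlen : ∀ X : C, WellFoundedGT (Subobject X) ∧ WellFoundedLT (Subobject X))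
    (hss : ∀ B B' : C, IsSemisimpleObject B → IsSemisimpleObject B' →
      Subsingleton (Ext B B' 2)) :
    ∀ A B : C, Subsingleton (Ext A B 2) := by
  have hsimple : ∀ S : C, Simple S → ∀ B : C, Subsingleton (Ext S B 2) := by
    intro S hS
    refine Stmt1Aux.quotInd hlen (fun B => Subsingleton (Ext S B 2))
      (fun e h => Stmt1Aux.subsing_iso_right e 2 h)
      (fun X hX => Stmt1Aux.subsing_of_isZero_right hX 2) ?_
    intro X T hT hcoker
    exact Stmt1Aux.subsing_middle_cov (Stmt1Aux.ses_shortExact X T) S 2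
      (hss _ _ (Stmt1Aux.semisimple_of_simple S hS) (Stmt1Aux.semisimple_of_simple _ hT)) hcoker
  intro A B
  refine Stmt1Aux.quotInd hlen (fun A => Subsingleton (Ext A B 2))
    (fun e h => Stmt1Aux.subsing_iso_left e 2 h)
    (fun X hX => Stmt1Aux.subsing_of_isZero_left hX 2) ?_ A
  intro X T hT hcoker
  exact Stmt1Aux.subsing_middle_contra (Stmt1Aux.ses_shortExact X T) B 2 hcoker (hsimple _ hT B)
end

section
/- Let γ : C → C' be an additive exact fully faithful functor between abelian categories such that for all objects B₀, B₁ of C the induced map Ext^1(B₁, B₀) → Ext^1(γ(B₁), γ(B₀)) is surjective. Then the essential image of γ is closed under extensions: for every short exact sequence 0 → X₀ → X → X₁ → 0 in C' with X₀ ≅ γ(B₀) and X₁ ≅ γ(B₁) for some objects B₀, B₁ of C, the middle object X is isomorphic to γ(B) for some object B of C. -/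
/-!
STATEMENT 7 (the essential-surjectivity step in the proof of Proposition 9.4):
Let `γ : C ⥤ C'` be an additive exact fully faithful functor between abelian
categories such that for all objects `B₀`, `B₁` of `C` the induced map
`Ext¹(B₁, B₀) → Ext¹(γ B₁, γ B₀)` is surjective.  Then the essential image of `γ` is
closed under extensions: for every short exact sequence `0 → X₀ → X → X₁ → 0` in `C'`
with `X₀ ≅ γ B₀` and `X₁ ≅ γ B₁` for some objects `B₀`, `B₁` of `C`, the middle
object `X` is isomorphic to `γ B` for some object `B` of `C`.

Since this version of Mathlib has no functor-induced map on `Abelian.Ext`, the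
induced map on `Ext¹` is expressed via Yoneda extensions: elements of `Ext¹(A, B)`
are short exact sequences `0 → B → E → A → 0` up to equivalence, and an exact functor
maps extensions to extensions; surjectivity of the induced map is surjectivity on
equivalence classes.
-/

open CategoryTheory CategoryTheory.Abelian CategoryTheory.Limits

universe w₁ w₂ v₁ v₂ u₁ u₂

/-- A Yoneda extension of `A` by `B`: a short exact sequence `0 → B → E → A → 0`.
Equivalence classes of these form the Yoneda `Ext¹(A, B)`. -/
structure YExt {C : Type u₁} [Category.{v₁} C] [Abelian C] (A B : C) where
  E : C
  ι : B ⟶ E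
  π : E ⟶ A
  zero : ι ≫ π = 0
  shortExact : (ShortComplex.mk ι π zero).ShortExact

/-- Two extensions of `A` by `B` represent the same class in `Ext¹(A, B)` iff they are
linked by an isomorphism commuting with the structure maps. -/
def YExtEquiv {C : Type u₁} [Category.{v₁} C] [Abelian C] {A B : C}
    (S T : YExt A B) : Prop :=
  ∃ φ : S.E ≅ T.E, S.ι ≫ φ.hom = T.ι ∧ φ.hom ≫ T.π = S.π

/-- The image of an extension under an exact functor. -/
def YExt.map {C : Type u₁} [Category.{v₁} C] [Abelian C]
    {C' : Type u₂} [Category.{v₂} C'] [Abelian C']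
    (γ : C ⥤ C') [γ.Additive] [PreservesFiniteLimits γ] [PreservesFiniteColimits γ]
    {A B : C} (S : YExt A B) : YExt (γ.obj A) (γ.obj B) where
  E := γ.obj S.E
  ι := γ.map S.ι
  π := γ.map S.π
  zero := by rw [← γ.map_comp, S.zero, γ.map_zero]
  shortExact := S.shortExact.map_of_exact γ

/-- The map `Ext¹(A, B) → Ext¹(γ A, γ B)` induced by an exact functor `γ` is
surjective. -/
def YExtMapSurjective {C : Type u₁} [Category.{v₁} C] [Abelian C]
    {C' : Type u₂} [Category.{v₂} C'] [Abelian C']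
    (γ : C ⥤ C') [γ.Additive] [PreservesFiniteLimits γ] [PreservesFiniteColimits γ]
    (A B : C) : Prop :=
  ∀ T : YExt (γ.obj A) (γ.obj B), ∃ S : YExt A B, YExtEquiv (S.map γ) T

/-- The map `Ext¹(A, B) → Ext¹(γ A, γ B)` induced by an exact functor `γ` is
injective. -/
def YExtMapInjective {C : Type u₁} [Category.{v₁} C] [Abelian C]
    {C' : Type u₂} [Category.{v₂} C'] [Abelian C']
    (γ : C ⥤ C') [γ.Additive] [PreservesFiniteLimits γ] [PreservesFiniteColimits γ]
    (A B : C) : Prop :=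
  ∀ S T : YExt A B, YExtEquiv (S.map γ) (T.map γ) → YExtEquiv S T

theorem stmt7 {C : Type u₁} [Category.{v₁} C] [Abelian C]
    {C' : Type u₂} [Category.{v₂} C'] [Abelian C']
    -- `γ` is an additive exact fully faithful functor:
    (γ : C ⥤ C') [γ.Additive] [γ.Full] [γ.Faithful]
    [PreservesFiniteLimits γ] [PreservesFiniteColimits γ]
    -- the induced map `Ext¹(B₁, B₀) → Ext¹(γ B₁, γ B₀)` is surjective:
    (hsurj : ∀ B₀ B₁ : C, YExtMapSurjective γ B₁ B₀)
    -- a short exact sequence `0 → X₀ → X → X₁ → 0` in `C'`: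
    {X₀ X X₁ : C'} (f : X₀ ⟶ X) (g : X ⟶ X₁) (hzero : f ≫ g = 0)
    (hse : (ShortComplex.mk f g hzero).ShortExact)
    -- whose end terms lie in the essential image of `γ`:
    (B₀ B₁ : C) (e₀ : X₀ ≅ γ.obj B₀) (e₁ : X₁ ≅ γ.obj B₁) :
    -- then the middle term lies in the essential image of `γ`:
    ∃ B : C, Nonempty (X ≅ γ.obj B) := by
  have hzero' : (e₀.inv ≫ f) ≫ (g ≫ e₁.hom) = 0 := by
    rw [Category.assoc, reassoc_of% hzero, zero_comp, comp_zero]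
  have hse' : (ShortComplex.mk (e₀.inv ≫ f) (g ≫ e₁.hom) hzero').ShortExact := by
    refine ShortComplex.shortExact_of_iso ?_ hse
    exact ShortComplex.isoMk e₀ (Iso.refl X) e₁ (by simp) (by simp)
  obtain ⟨S, φ, hφ₁, hφ₂⟩ := hsurj B₀ B₁ ⟨X, e₀.inv ≫ f, g ≫ e₁.hom, hzero', hse'⟩
  exact ⟨S.E, ⟨φ.symm⟩⟩
end
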